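/- (Lemma 4, (i−1)th-round lemma.) Fix i ≥ 2 and consider an i-round dynamic inference model. Given any estimation strategy (ψ₁,…,ψ_{i−1}, ψ̄ᵢ) whose last estimator ψ̄ᵢ : 𝒳 → 𝒴̂ is Markov, there exists a Markov estimator ψ̄_{i−1} : 𝒳 → 𝒴̂ for the (i−1)th round such that J(ψ₁,…,ψ_{i−2}, ψ̄_{i−1}, ψ̄ᵢ) ≤ J(ψ₁,…,ψ_{i−1}, ψ̄ᵢ), where J denotes the inference loss of the i-round problem. -/

import Mathlib

noncomputable section

/-- Expectation of a real-valued function under a probability mass function on a finite type. -/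
def pexp {α : Type*} [Fintype α] (p : PMF α) (f : α → ℝ) : ℝ :=
  ∑ a, (p a).toReal * f a

/-- A (history-dependent) estimation strategy: the round-`i` estimator maps the current
observation `Xᵢ`, the past observations `X^{i-1}` and the past revealed quantities `Y^{i-1}`
(together forming `(X^i, Y^{i-1})`) to an estimate `Ŷᵢ`. -/
abbrev Strategy (𝓧 𝓨 𝓨h : Type*) : Type _ := ℕ → 𝓧 → List 𝓧 → List 𝓨 → 𝓨h

/-- The strategy induced by a sequence of Markov estimators `ψᵢ : 𝓧 → 𝓨h`. -/
def markovStrategy {𝓧 𝓨 𝓨h : Type*} (ψ : ℕ → 𝓧 → 𝓨h) : Strategy 𝓧 𝓨 𝓨h :=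
  fun i x _ _ => ψ i x

/-- Replace the round-`n` estimator of a strategy by another one. -/
def replaceRound {𝓧 𝓨 𝓨h : Type*} (ψ : Strategy 𝓧 𝓨 𝓨h) (n : ℕ)
    (ψn : Strategy 𝓧 𝓨 𝓨h) : Strategy 𝓧 𝓨 𝓨h :=
  fun i x hx hy => if i = n then ψn i x hx hy else ψ i x hx hy

/-- The observation-estimate loss `ℓ̄ᵢ(x, yh) = E_{Y ∼ νᵢ(x)}[ℓ(x, Y, yh)]`. -/
def lbar {𝓧 𝓨 𝓨h : Type*} [Fintype 𝓨] (ν : ℕ → 𝓧 → PMF 𝓨)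
    (ℓ : 𝓧 → 𝓨 → 𝓨h → ℝ) (i : ℕ) (x : 𝓧) (yh : 𝓨h) : ℝ :=
  pexp (ν i x) fun y => ℓ x y yh

/-- `lossFrom κ ν L ψ i m x hx hy` : expected accumulated loss over `m` rounds (rounds
`i, i+1, …, i+m-1`), starting at round `i` with current observation `x`, past observation
history `hx` and past quantity history `hy`, under the (possibly round-dependent) contextual
loss `L` and the strategy `ψ`.  The process evolves as `Yᵢ ∼ νᵢ(Xᵢ)` (conditionally
independent of everything else given `Xᵢ`), `Ŷᵢ = ψᵢ(X^i, Y^{i-1})`,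
`X_{i+1} ∼ κ_{i+1}(Xᵢ, Ŷᵢ)`. -/
def lossFrom {𝓧 𝓨 𝓨h : Type*} [Fintype 𝓧] [Fintype 𝓨]
    (κ : ℕ → 𝓧 → 𝓨h → PMF 𝓧) (ν : ℕ → 𝓧 → PMF 𝓨)
    (L : ℕ → 𝓧 → 𝓨 → 𝓨h → ℝ) (ψ : Strategy 𝓧 𝓨 𝓨h) :
    ℕ → ℕ → 𝓧 → List 𝓧 → List 𝓨 → ℝ
  | _, 0, _, _, _ => 0
  | i, m + 1, x, hx, hy =>
      pexp (ν i x) fun y =>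
        L i x y (ψ i x hx hy) +
          pexp (κ (i + 1) x (ψ i x hx hy)) fun x' =>
            lossFrom κ ν L ψ (i + 1) m x' (hx ++ [x]) (hy ++ [y])

/-- The inference loss `J(ψ) = E[∑_{i=1}^n ℓ(Xᵢ, Yᵢ, Ŷᵢ)]` of strategy `ψ` for the
`n`-round dynamic inference problem with initial distribution `P₁`. -/
def J {𝓧 𝓨 𝓨h : Type*} [Fintype 𝓧] [Fintype 𝓨] (P₁ : PMF 𝓧)
    (κ : ℕ → 𝓧 → 𝓨h → PMF 𝓧) (ν : ℕ → 𝓧 → PMF 𝓨)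
    (ℓ : 𝓧 → 𝓨 → 𝓨h → ℝ) (n : ℕ) (ψ : Strategy 𝓧 𝓨 𝓨h) : ℝ :=
  pexp P₁ fun x => lossFrom κ ν (fun _ => ℓ) ψ 1 n x [] []

/-- `Eat κ ν g ψ i s x hx hy` : the expectation `E[g(X_{i+s}, Y_{i+s}, Ŷ_{i+s})]` of a
single-round quantity at round `i + s`, for the process started at round `i` with current
observation `x` and histories `hx`, `hy`, run under the strategy `ψ`. -/
def Eat {𝓧 𝓨 𝓨h : Type*} [Fintype 𝓧] [Fintype 𝓨]
    (κ : ℕ → 𝓧 → 𝓨h → PMF 𝓧) (ν : ℕ → 𝓧 → PMF 𝓨)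
    (g : 𝓧 → 𝓨 → 𝓨h → ℝ) (ψ : Strategy 𝓧 𝓨 𝓨h) :
    ℕ → ℕ → 𝓧 → List 𝓧 → List 𝓨 → ℝ
  | i, 0, x, hx, hy => pexp (ν i x) fun y => g x y (ψ i x hx hy)
  | i, s + 1, x, hx, hy =>
      pexp (ν i x) fun y =>
        pexp (κ (i + 1) x (ψ i x hx hy)) fun x' =>
          Eat κ ν g ψ (i + 1) s x' (hx ++ [x]) (hy ++ [y])

/-- The dynamic-programming value function: `Vstar κ ν ℓ i m x` is `V*ᵢ(x)` when exactly `m`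
rounds follow round `i` (so round `i` is the last round iff `m = 0`):
`V*ᵢ(x) = min_{yh} Q*ᵢ(x, yh)`, with `Q*` as in `Qstar`. -/
def Vstar {𝓧 𝓨 𝓨h : Type*} [Fintype 𝓧] [Fintype 𝓨]
    (κ : ℕ → 𝓧 → 𝓨h → PMF 𝓧) (ν : ℕ → 𝓧 → PMF 𝓨)
    (ℓ : 𝓧 → 𝓨 → 𝓨h → ℝ) : ℕ → ℕ → 𝓧 → ℝ
  | i, 0, x => ⨅ yh, lbar ν ℓ i x yh
  | i, m + 1, x =>
      ⨅ yh, (lbar ν ℓ i x yh + pexp (κ (i + 1) x yh) fun x' => Vstar κ ν ℓ (i + 1) m x')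

/-- The dynamic-programming Q-function: `Qstar κ ν ℓ i m x yh` is `Q*ᵢ(x, yh)` when exactly `m`
rounds follow round `i`: `Q*ₙ(x,yh) = ℓ̄ₙ(x,yh)` in the last round, and otherwise
`Q*ᵢ(x,yh) = ℓ̄ᵢ(x,yh) + E_{x' ∼ κ_{i+1}(x,yh)}[V*_{i+1}(x')]`. -/
def Qstar {𝓧 𝓨 𝓨h : Type*} [Fintype 𝓧] [Fintype 𝓨]
    (κ : ℕ → 𝓧 → 𝓨h → PMF 𝓧) (ν : ℕ → 𝓧 → PMF 𝓨)
    (ℓ : 𝓧 → 𝓨 → 𝓨h → ℝ) : ℕ → ℕ → 𝓧 → 𝓨h → ℝ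
  | i, 0, x, yh => lbar ν ℓ i x yh
  | i, m + 1, x, yh =>
      lbar ν ℓ i x yh + pexp (κ (i + 1) x yh) fun x' => Vstar κ ν ℓ (i + 1) m x'

lemma pexp_mono {α : Type*} [Fintype α] (p : PMF α) {f g : α → ℝ}
    (h : ∀ a, f a ≤ g a) : pexp p f ≤ pexp p g := by
  refine Finset.sum_le_sum fun a _ => ?_
  exact mul_le_mul_of_nonneg_left (h a) ENNReal.toReal_nonneg

lemma pexp_sum_one {α : Type*} [Fintype α] (p : PMF α) : ∑ a, (p a).toReal = 1 := by
  rw [← ENNReal.toReal_sum (fun a _ => PMF.apply_ne_top p a)]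
  have : ∑ a, p a = 1 := by rw [← tsum_fintype (L := SummationFilter.unconditional _)]; exact p.tsum_coe
  rw [this, ENNReal.toReal_one]

lemma pexp_add_const {α : Type*} [Fintype α] (p : PMF α) (f : α → ℝ) (c : ℝ) :
    pexp p (fun a => f a + c) = pexp p f + c := by
  unfold pexp
  simp only [mul_add, Finset.sum_add_distrib, ← Finset.sum_mul, pexp_sum_one, one_mul]

lemma pexp_zero {α : Type*} [Fintype α] (p : PMF α) : pexp p (fun _ => 0) = 0 := by
  simp [pexp]

lemma pexp_congr {α : Type*} [Fintype α] (p : PMF α) {f g : α → ℝ}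
    (h : ∀ a, f a = g a) : pexp p f = pexp p g := by
  unfold pexp; exact Finset.sum_congr rfl fun a _ => by rw [h a]

/-- Unfolding of `lossFrom` over the last two rounds, when the last-round estimator is
the Markov estimator `ψbarᵢ`. -/
lemma lossFrom_two {𝓧 𝓨 𝓨h : Type*} [Fintype 𝓧] [Fintype 𝓨]
    (κ : ℕ → 𝓧 → 𝓨h → PMF 𝓧) (ν : ℕ → 𝓧 → PMF 𝓨) (ℓ : 𝓧 → 𝓨 → 𝓨h → ℝ)
    (ψA : Strategy 𝓧 𝓨 𝓨h) (ψbarᵢ : 𝓧 → 𝓨h) (j : ℕ)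
    (hA : ∀ x hx hy, ψA (j + 1) x hx hy = ψbarᵢ x) (x : 𝓧) (hx : List 𝓧) (hy : List 𝓨) :
    lossFrom κ ν (fun _ => ℓ) ψA j 2 x hx hy =
      lbar ν ℓ j x (ψA j x hx hy) +
        pexp (κ (j + 1) x (ψA j x hx hy))
          (fun x' => lbar ν ℓ (j + 1) x' (ψbarᵢ x')) := by
  show pexp (ν j x) _ = _
  simp only [lbar]
  rw [← pexp_add_const (ν j x) (fun y => ℓ x y (ψA j x hx hy))]
  refine pexp_congr _ fun y => ?_
  congr 1
  refine pexp_congr _ fun x' => ?_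
  show pexp (ν (j+1) x') _ = _
  rw [show (pexp (ν (j+1) x') fun y => ℓ x' y (ψbarᵢ x')) = (pexp (ν (j+1) x') fun y => ℓ x' y (ψbarᵢ x')) + 0 by ring,
    ← pexp_add_const (ν (j+1) x') (fun y' => ℓ x' y' (ψbarᵢ x'))]
  refine pexp_congr _ fun y' => ?_
  rw [hA]
  show ℓ x' y' (ψbarᵢ x') + pexp _ (fun _ => 0) = _
  rw [pexp_zero]

lemma lossFrom_succ {𝓧 𝓨 𝓨h : Type*} [Fintype 𝓧] [Fintype 𝓨]
    (κ : ℕ → 𝓧 → 𝓨h → PMF 𝓧) (ν : ℕ → 𝓧 → PMF 𝓨)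
    (L : ℕ → 𝓧 → 𝓨 → 𝓨h → ℝ) (ψ : Strategy 𝓧 𝓨 𝓨h) (j m : ℕ) (x : 𝓧)
    (hx : List 𝓧) (hy : List 𝓨) :
    lossFrom κ ν L ψ j (m + 1) x hx hy =
      pexp (ν j x) fun y =>
        L j x y (ψ j x hx hy) +
          pexp (κ (j + 1) x (ψ j x hx hy)) fun x' =>
            lossFrom κ ν L ψ (j + 1) m x' (hx ++ [x]) (hy ++ [y]) := rfl

/-- **Lemma 4, (i−1)th-round lemma.** Fix `i ≥ 2` and an `i`-round dynamic
inference model. For any estimation strategy whose last (round-`i`) estimator is the Markov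
estimator `ψbarᵢ : 𝓧 → 𝓨h` (and whose earlier estimators are those of an arbitrary
history-dependent strategy `ψ`), there is a Markov estimator `ψ̄ᵢ₋₁ : 𝓧 → 𝓨h` such that also
replacing the round-`(i−1)` estimator by it does not increase the inference loss. -/
theorem penultimate_round_lemma {𝓧 𝓨 𝓨h : Type*} [Fintype 𝓧] [Nonempty 𝓧] [Fintype 𝓨] [Nonempty 𝓨]
    [Fintype 𝓨h] [Nonempty 𝓨h]
    (P₁ : PMF 𝓧) (κ : ℕ → 𝓧 → 𝓨h → PMF 𝓧) (ν : ℕ → 𝓧 → PMF 𝓨)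
    (ℓ : 𝓧 → 𝓨 → 𝓨h → ℝ) (i : ℕ) (hi : 2 ≤ i) (ψ : Strategy 𝓧 𝓨 𝓨h) (ψbarᵢ : 𝓧 → 𝓨h) :
    ∃ ψbar : 𝓧 → 𝓨h,
      J P₁ κ ν ℓ i
          (replaceRound (replaceRound ψ i (fun _ x _ _ => ψbarᵢ x)) (i - 1)
            (fun _ x _ _ => ψbar x)) ≤
        J P₁ κ ν ℓ i (replaceRound ψ i (fun _ x _ _ => ψbarᵢ x)) := by
  have hj1 : i - 1 + 1 = i := by omega
  set ψ₂ : Strategy 𝓧 𝓨 𝓨h := replaceRound ψ i (fun _ x _ _ => ψbarᵢ x) with hψ₂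
  -- the Q-function for round i-1 given that round i uses ψbarᵢ
  set Q : 𝓧 → 𝓨h → ℝ := fun x yh =>
    lbar ν ℓ (i - 1) x yh + pexp (κ i x yh) (fun x' => lbar ν ℓ i x' (ψbarᵢ x')) with hQ
  have hex : ∀ x : 𝓧, ∃ yh : 𝓨h, ∀ z, Q x yh ≤ Q x z := by
    intro x
    obtain ⟨yh, -, h⟩ := Finset.exists_min_image Finset.univ (Q x)
      ⟨Classical.arbitrary 𝓨h, Finset.mem_univ _⟩
    exact ⟨yh, fun z => h z (Finset.mem_univ z)⟩
  choose ψbar hmin using hex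
  refine ⟨ψbar, ?_⟩
  set ψ₃ : Strategy 𝓧 𝓨 𝓨h := replaceRound ψ₂ (i - 1) (fun _ x _ _ => ψbar x) with hψ₃
  have hψ₂i : ∀ x hx hy, ψ₂ i x hx hy = ψbarᵢ x := by
    intro x hx hy; simp [hψ₂, replaceRound]
  have hψ₃i : ∀ x hx hy, ψ₃ i x hx hy = ψbarᵢ x := by
    intro x hx hy
    simp [hψ₃, replaceRound, show i ≠ i - 1 from by omega, hψ₂i x hx hy]
  -- key inequality at round i-1 (two rounds remaining)
  have key : ∀ x hx hy, lossFrom κ ν (fun _ => ℓ) ψ₃ (i - 1) 2 x hx hy ≤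
      lossFrom κ ν (fun _ => ℓ) ψ₂ (i - 1) 2 x hx hy := by
    intro x hx hy
    rw [lossFrom_two κ ν ℓ ψ₃ ψbarᵢ (i - 1)
        (by intro a b c; rw [hj1]; exact hψ₃i a b c) x hx hy,
      lossFrom_two κ ν ℓ ψ₂ ψbarᵢ (i - 1)
        (by intro a b c; rw [hj1]; exact hψ₂i a b c) x hx hy,
      hj1]
    have he3 : ψ₃ (i - 1) x hx hy = ψbar x := by simp [hψ₃, replaceRound]
    rw [he3]
    exact hmin x (ψ₂ (i - 1) x hx hy)
  -- propagate the inequality back to round 1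
  have main : ∀ m, 2 ≤ m → m ≤ i → ∀ x hx hy,
      lossFrom κ ν (fun _ => ℓ) ψ₃ (i + 1 - m) m x hx hy ≤
        lossFrom κ ν (fun _ => ℓ) ψ₂ (i + 1 - m) m x hx hy := by
    intro m hm
    induction m, hm using Nat.le_induction with
    | base =>
      intro _ x hx hy
      have h2 : i + 1 - 2 = i - 1 := by omega
      rw [h2]; exact key x hx hy
    | succ m hm IH =>
      intro hmi x hx hy
      have hj : i + 1 - (m + 1) + 1 = i + 1 - m := by omega
      have hne : i + 1 - (m + 1) ≠ i - 1 := by omega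
      have he : ψ₃ (i + 1 - (m + 1)) x hx hy = ψ₂ (i + 1 - (m + 1)) x hx hy := by
        simp only [hψ₃, replaceRound, if_neg hne]
      rw [lossFrom_succ, lossFrom_succ, he]
      refine pexp_mono _ fun y => add_le_add_right (pexp_mono _ fun x' => ?_) _
      rw [hj]
      exact IH (by omega) x' (hx ++ [x]) (hy ++ [y])
  have h1 : i + 1 - i = 1 := by omega
  refine pexp_mono _ fun x => ?_
  have := main i hi le_rfl x [] []
  rwa [h1] at this

end
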